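/- Under Assumptions A1 (continuity and compactness), A2 (strict dissipativity), A3 (terminal conditions), A4 (terminal cost on orbit) and A5 (bound on V_N), the rotated value function Ṽ_N is a candidate Lyapunov function: there exist class-K_∞ functions α_1, α_2 such that for all x ∈ X_N, (i) α_1(||(x,μ_N(x))||_{Π*}) ≤ Ṽ_N(x) ≤ α_2(||x||_{Π*_X}), and (ii) Ṽ_N(f(x,μ_N(x))) − Ṽ_N(x) ≤ −ℓ̃(x,μ_N(x)). -/

import Mathlib

open Filter Topology

section EMPCDefs

variable {E F : Type*} [NormedAddCommGroup E] [NormedAddCommGroup F]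

/-- State trajectory `x_u(k, x₀)` of the system `x⁺ = f(x, u)` under input sequence `u`. -/
def traj (f : E × F → E) (x : E) (u : ℕ → F) : ℕ → E
  | 0 => x
  | k + 1 => f (traj f x u k, u k)

/-- `u ∈ U^N(x)`: input sequences of length `N` keeping the state in `X`. -/
def FeasN (f : E × F → E) (X : Set E) (U : Set F) (x : E) (N : ℕ) (u : ℕ → F) : Prop :=
  (∀ k < N, u k ∈ U) ∧ ∀ k ≤ N, traj f x u k ∈ X

/-- `u ∈ U^∞(x)`: infinite input sequences keeping the state in `X`. -/
def FeasInf (f : E × F → E) (X : Set E) (U : Set F) (x : E) (u : ℕ → F) : Prop :=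
  (∀ k, u k ∈ U) ∧ ∀ k, traj f x u k ∈ X

/-- The feasible set `X_N` of the terminal-constrained problem. -/
def XN (f : E × F → E) (X : Set E) (U : Set F) (Xf : Set E) (N : ℕ) : Set E :=
  {x | ∃ u : ℕ → F, FeasN f X U x N u ∧ traj f x u N ∈ Xf}

/-- The feasible set `X_∞`. -/
def XInf (f : E × F → E) (X : Set E) (U : Set F) : Set E :=
  {x | ∃ u : ℕ → F, FeasInf f X U x u}

/-- Distance `‖(x,u)‖_Π` of a state-input pair to a `p`-periodic orbit `Π = (i ↦ P i)`. -/
noncomputable def distOrbit (p : ℕ) (P : ℕ → E × F) (z : E × F) : ℝ :=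
  ⨅ i : Fin p, ‖z - P ↑i‖

/-- Distance `‖x‖_{Π_X}` of a state to the state part of a `p`-periodic orbit. -/
noncomputable def distOrbitX (p : ℕ) (PX : ℕ → E) (x : E) : ℝ :=
  ⨅ i : Fin p, ‖x - PX ↑i‖

/-- `Π = (Π_X, Π_U)` (given on `{0, …, p-1}`) is a feasible `p`-periodic orbit. -/
def FeasOrbit (f : E × F → E) (X : Set E) (U : Set F) (p : ℕ)
    (PX : ℕ → E) (PU : ℕ → F) : Prop :=
  (∀ i < p, PX i ∈ X) ∧ (∀ i < p, PU i ∈ U) ∧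
    ∀ i < p, PX ((i + 1) % p) = f (PX i, PU i)

/-- Average cost `ℓ_Π = (1/p) Σ_{i<p} ℓ(Π(i))` of a `p`-periodic orbit. -/
noncomputable def avgCost (ℓ : E × F → ℝ) (p : ℕ) (PX : ℕ → E) (PU : ℕ → F) : ℝ :=
  (1 / (p : ℝ)) * ∑ i ∈ Finset.range p, ℓ (PX i, PU i)

/-- Average `(1/p) Σ_{i<p} g(Π_X(i))` of a function over the state part of an orbit. -/
noncomputable def avgOrbit (g : E → ℝ) (p : ℕ) (PX : ℕ → E) : ℝ :=
  (1 / (p : ℝ)) * ∑ i ∈ Finset.range p, g (PX i)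

/-- `Π*` is an optimal periodic orbit: it is feasible and its average cost is the
infimum of the average costs over all feasible periodic orbits. -/
def IsOptimalOrbit (f : E × F → E) (X : Set E) (U : Set F) (ℓ : E × F → ℝ) (p : ℕ)
    (PX : ℕ → E) (PU : ℕ → F) : Prop :=
  FeasOrbit f X U p PX PU ∧
    ∀ q : ℕ, 0 < q → ∀ (QX : ℕ → E) (QU : ℕ → F),
      FeasOrbit f X U q QX QU → avgCost ℓ p PX PU ≤ avgCost ℓ q QX QU

/-- Accumulated stage cost `J^1_K(x, u)`. -/
noncomputable def J1 (f : E × F → E) (ℓ : E × F → ℝ) (x : E) (u : ℕ → F) (K : ℕ) : ℝ :=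
  ∑ k ∈ Finset.range K, ℓ (traj f x u k, u k)

/-- Finite-horizon cost functional `J_N(x, u)` with terminal cost `Vf`. -/
noncomputable def JN (f : E × F → E) (ℓ : E × F → ℝ) (Vf : E → ℝ) (x : E) (u : ℕ → F)
    (N : ℕ) : ℝ :=
  J1 f ℓ x u N + Vf (traj f x u N)

/-- Optimal value function `V_N(x)` of the terminal-constrained problem. -/
noncomputable def VN (f : E × F → E) (X : Set E) (U : Set F) (ℓ : E × F → ℝ) (Vf : E → ℝ)
    (Xf : Set E) (N : ℕ) (x : E) : ℝ :=
  sInf ((fun u => JN f ℓ Vf x u N) '' {u : ℕ → F | FeasN f X U x N u ∧ traj f x u N ∈ Xf})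

/-- Rotated stage cost `ℓ̃(x,u) = ℓ(x,u) - ℓ_{Π*} + λ(x) - λ(f(x,u))`. -/
def rotCost (f : E × F → E) (ℓ : E × F → ℝ) (lam : E → ℝ) (lp : ℝ) (z : E × F) : ℝ :=
  ℓ z - lp + lam z.1 - lam (f z)

/-- Finite-horizon Cesàro cost `J^ces_K(x,u) = Σ_{k<K} (1 - k/K) ℓ(x_u(k,x), u(k))`. -/
noncomputable def Jces (f : E × F → E) (ℓ : E × F → ℝ) (x : E) (u : ℕ → F) (K : ℕ) : ℝ :=
  ∑ k ∈ Finset.range K, (1 - (k : ℝ) / (K : ℝ)) * ℓ (traj f x u k, u k)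

/-- Infinite-horizon Cesàro cost `J^ces_∞(x,u) = limsup_K J^ces_K(x,u)`. -/
noncomputable def JcesInf (f : E × F → E) (ℓ : E × F → ℝ) (x : E) (u : ℕ → F) : ℝ :=
  limsup (fun K : ℕ => Jces f ℓ x u K) atTop

/-- Unconditioned infinite-horizon value `V^uc_∞(x)`. -/
noncomputable def VucInf (f : E × F → E) (X : Set E) (U : Set F) (ℓ : E × F → ℝ)
    (x : E) : ℝ :=
  sInf ((fun u => JcesInf f ℓ x u) '' {u : ℕ → F | FeasInf f X U x u})

/-- Closed-loop state trajectory `x_μ(k, x)` under a feedback law `μ`. -/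
def trajCl (f : E × F → E) (μ : E → F) (x : E) : ℕ → E
  | 0 => x
  | k + 1 => f (trajCl f μ x k, μ (trajCl f μ x k))

/-- Closed-loop finite-horizon Cesàro cost `J^cl_K(x, μ)`. -/
noncomputable def JclK (f : E × F → E) (ℓ : E × F → ℝ) (μ : E → F) (x : E) (K : ℕ) : ℝ :=
  ∑ k ∈ Finset.range K, (1 - (k : ℝ) / (K : ℝ)) * ℓ (trajCl f μ x k, μ (trajCl f μ x k))

/-- Closed-loop infinite-horizon Cesàro cost `J^cl_∞(x, μ)`. -/
noncomputable def JclInf (f : E × F → E) (ℓ : E × F → ℝ) (μ : E → F) (x : E) : ℝ :=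
  limsup (fun K : ℕ => JclK f ℓ μ x K) atTop

end EMPCDefs

/-- Class `K_∞` comparison functions `[0,∞) → [0,∞)`. -/
def IsKInf (α : ℝ → ℝ) : Prop :=
  ContinuousOn α (Set.Ici 0) ∧ StrictMonoOn α (Set.Ici 0) ∧ α 0 = 0 ∧
    Filter.Tendsto α Filter.atTop Filter.atTop

/-- Class `L` comparison functions `[0,∞) → [0,∞)`. -/
def IsClassL (σ : ℝ → ℝ) : Prop :=
  ContinuousOn σ (Set.Ici 0) ∧ AntitoneOn σ (Set.Ici 0) ∧ (∀ t, 0 ≤ t → 0 ≤ σ t) ∧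
    Filter.Tendsto σ Filter.atTop (nhds 0)


section AuxLemmas

private noncomputable def kseq (δ0 : ℕ → ℝ) : ℕ → ℝ
  | 0 => δ0 0
  | n + 1 => min (kseq δ0 n / 2) (δ0 (n + 1))

lemma kinf_majorant (g : ℝ → ℝ) (M : ℝ) (hM : 0 ≤ M)
    (hgM : ∀ t, 0 ≤ t → g t ≤ M)
    (hsmall : ∀ ε > 0, ∃ δ > 0, ∀ t, 0 ≤ t → t ≤ δ → g t ≤ ε) :
    ∃ β : ℝ → ℝ, IsKInf β ∧ ∀ t, 0 ≤ t → g t ≤ β t := by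
  choose δ0 hδ0pos hδ0 using fun n => hsmall ((1/2 : ℝ) ^ n) (by positivity)
  set d : ℕ → ℝ := kseq δ0 with hd
  have hdpos : ∀ n, 0 < d n := by
    intro n; induction n with
    | zero => exact hδ0pos 0
    | succ n ih => exact lt_min (by linarith) (hδ0pos (n+1))
  have hdle : ∀ n, d n ≤ δ0 n := by
    intro n; cases n with
    | zero => exact le_refl _
    | succ n => exact min_le_right _ _
  have hdhalf : ∀ n, d (n+1) ≤ d n / 2 := fun n => min_le_left _ _
  have hdgeom : ∀ n, d n ≤ d 0 / 2 ^ n := by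
    intro n; induction n with
    | zero => simp
    | succ n ih =>
      calc d (n+1) ≤ d n / 2 := hdhalf n
        _ ≤ d 0 / 2 ^ n / 2 := by linarith
        _ = d 0 / 2 ^ (n+1) := by ring
  have hgd : ∀ n, ∀ t, 0 ≤ t → t ≤ d n → g t ≤ (1/2) ^ n := by
    intro n t ht htd; exact hδ0 n t ht (htd.trans (hdle n))
  set fn : ℕ → ℝ → ℝ := fun n t => (1/2 : ℝ) ^ n * min 1 (max 0 t / d n) with hfn
  have hfn_nonneg : ∀ n t, 0 ≤ fn n t := by
    intro n t
    have h1 : (0:ℝ) ≤ max 0 t / d n := div_nonneg (le_max_left _ _) (hdpos n).le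
    have h2 : (0:ℝ) ≤ min 1 (max 0 t / d n) := le_min one_pos.le h1
    positivity
  have hfn_le : ∀ n t, fn n t ≤ (1/2) ^ n := by
    intro n t
    have h : min 1 (max 0 t / d n) ≤ 1 := min_le_left _ _
    exact mul_le_of_le_one_right (by positivity) h
  have hsummable : Summable (fun n : ℕ => (1/2 : ℝ) ^ n) :=
    summable_geometric_of_lt_one (by norm_num) (by norm_num)
  have hfns : ∀ t, Summable (fun n => fn n t) := fun t =>
    Summable.of_nonneg_of_le (fun n => hfn_nonneg n t) (fun n => hfn_le n t) hsummable
  set S : ℝ → ℝ := fun t => ∑' n, fn n t with hS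
  have hScont : Continuous S := by
    apply continuous_tsum (u := fun n => (1/2:ℝ)^n) _ hsummable
    · intro n t
      rw [Real.norm_eq_abs, abs_of_nonneg (hfn_nonneg n t)]; exact hfn_le n t
    · intro n
      exact continuous_const.mul (continuous_const.min
        ((continuous_const.max continuous_id).div_const _))
  have hSmono : Monotone S := by
    intro a b hab
    apply Summable.tsum_le_tsum _ (hfns a) (hfns b)
    intro n
    have : max 0 a / d n ≤ max 0 b / d n :=
      (div_le_div_iff_of_pos_right (hdpos n)).mpr (max_le_max le_rfl hab)
    exact mul_le_mul_of_nonneg_left (min_le_min le_rfl this) (by positivity)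
  have hS0 : S 0 = 0 := by
    have : ∀ n, fn n 0 = 0 := by
      intro n; simp [hfn]
    simp [hS, this]
  have hSnonneg : ∀ t, 0 ≤ S t := fun t => tsum_nonneg (fun n => hfn_nonneg n t)
  have hSterm : ∀ n t, fn n t ≤ S t := by
    intro n t
    exact Summable.le_tsum (hfns t) n (fun j _ => hfn_nonneg j t)
  have hmaj : ∀ t, 0 ≤ t → g t ≤ (M + 2) * S t := by
    intro t ht
    rcases eq_or_lt_of_le ht with h0 | h0
    · have : g 0 ≤ 0 := by
        have hlim : Tendsto (fun n : ℕ => (1/2:ℝ)^n) atTop (nhds 0) :=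
          tendsto_pow_atTop_nhds_zero_of_lt_one (by norm_num) (by norm_num)
        exact ge_of_tendsto' hlim (fun n => hgd n 0 le_rfl (hdpos n).le)
      rw [← h0]
      have := hSnonneg 0
      nlinarith
    · have hex : ∃ n, d n < t := by
        obtain ⟨n, hn⟩ := pow_unbounded_of_one_lt (d 0 / t) (by norm_num : (1:ℝ) < 2)
        refine ⟨n, ?_⟩
        have h2 : (0:ℝ) < 2 ^ n := by positivity
        have : d 0 / t < 2 ^ n := hn
        have : d 0 < t * 2 ^ n := by
          rw [div_lt_iff₀ h0] at this; linarith [this]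
        calc d n ≤ d 0 / 2 ^ n := hdgeom n
          _ < t := by rw [div_lt_iff₀ h2]; linarith
      classical
      let n0 := Nat.find hex
      have hn0 : d n0 < t := Nat.find_spec hex
      have hterm : ∀ m, d m < t → fn m t = (1/2)^m := by
        intro m hm
        have : max 0 t / d m ≥ 1 := by
          rw [max_eq_right ht, ge_iff_le, le_div_iff₀ (hdpos m)]; linarith
        simp [hfn, min_eq_left this]
      rcases Nat.eq_zero_or_pos n0 with hz | hpos
      · have h1 : fn 0 t = 1 := by
          have := hterm 0 (hz ▸ hn0); simpa using this
        have hSt : 1 ≤ S t := h1 ▸ hSterm 0 t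
        calc g t ≤ M := hgM t ht
          _ ≤ (M + 2) * 1 := by linarith
          _ ≤ (M + 2) * S t := by nlinarith
      · obtain ⟨m, hm⟩ : ∃ m, n0 = m + 1 := ⟨n0 - 1, by omega⟩
        have hnot : ¬ d m < t := Nat.find_min hex (by omega)
        have hgt : g t ≤ (1/2)^m := hgd m t ht (not_lt.mp hnot)
        have h1 : fn n0 t = (1/2)^n0 := hterm n0 hn0
        have hSt : (1/2:ℝ)^n0 ≤ S t := h1 ▸ hSterm n0 t
        have hp : (1/2:ℝ)^m = 2 * (1/2)^n0 := by
          rw [hm]; ring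
        calc g t ≤ (1/2)^m := hgt
          _ = 2 * (1/2)^n0 := hp
          _ ≤ (M + 2) * (1/2)^n0 := by
              have : (0:ℝ) < (1/2)^n0 := by positivity
              nlinarith
          _ ≤ (M + 2) * S t := by nlinarith
  refine ⟨fun t => t + (M + 2) * S t, ⟨?_, ?_, ?_, ?_⟩,
    fun t ht => by have := hmaj t ht; have := hSnonneg t; simp only []; nlinarith⟩
  · exact (continuous_id.add (continuous_const.mul hScont)).continuousOn
  · intro a _ b _ hab
    have h1 := hSmono hab.le
    have hM2 : (0:ℝ) ≤ M + 2 := by linarith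
    have h2 := mul_le_mul_of_nonneg_left h1 hM2
    simp only []
    linarith
  · simp [hS0]
  · have hle : ∀ t : ℝ, t ≤ t + (M + 2) * S t := by
      intro t
      have h1 := hSnonneg t
      have hM2 : (0:ℝ) ≤ M + 2 := by linarith
      have h2 := mul_nonneg hM2 h1
      linarith
    exact tendsto_atTop_mono hle tendsto_id

variable {E F : Type*} [NormedAddCommGroup E] [NormedAddCommGroup F]

lemma traj_zero' (f : E × F → E) (x : E) (u : ℕ → F) : traj f x u 0 = x := rfl

lemma traj_succ' (f : E × F → E) (x : E) (u : ℕ → F) (k : ℕ) :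
    traj f x u (k + 1) = f (traj f x u k, u k) := rfl

lemma J1_rot (f : E × F → E) (ℓ : E × F → ℝ) (lam : E → ℝ) (lp : ℝ)
    (x : E) (u : ℕ → F) (K : ℕ) :
    J1 f (rotCost f ℓ lam lp) x u K
      = J1 f ℓ x u K - K * lp + lam x - lam (traj f x u K) := by
  induction K with
  | zero => simp [J1, traj_zero']
  | succ K ih =>
    have h : rotCost f ℓ lam lp (traj f x u K, u K)
        = ℓ (traj f x u K, u K) - lp + lam (traj f x u K) - lam (traj f x u (K+1)) := rfl
    have e1 : J1 f (rotCost f ℓ lam lp) x u (K+1)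
        = J1 f (rotCost f ℓ lam lp) x u K + rotCost f ℓ lam lp (traj f x u K, u K) :=
      Finset.sum_range_succ _ _
    have e2 : J1 f ℓ x u (K+1) = J1 f ℓ x u K + ℓ (traj f x u K, u K) :=
      Finset.sum_range_succ _ _
    rw [e1, e2, ih, h]
    push_cast
    ring

lemma JN_rot (f : E × F → E) (ℓ : E × F → ℝ) (lam : E → ℝ) (lp A B : ℝ)
    (Vf : E → ℝ) (x : E) (u : ℕ → F) (K : ℕ) :
    JN f (rotCost f ℓ lam lp) (fun y => Vf y + lam y - A - B) x u K
      = JN f ℓ Vf x u K + (lam x - A - B - K * lp) := by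
  simp only [JN]
  rw [J1_rot]
  ring

lemma traj_orbit (f : E × F → E) (X : Set E) (U : Set F) (p : ℕ)
    (PX : ℕ → E) (PU : ℕ → F) (horb : FeasOrbit f X U p PX PU) (hp : 0 < p)
    (i : ℕ) (hi : i < p) (k : ℕ) :
    traj f (PX i) (fun j => PU ((i + j) % p)) k = PX ((i + k) % p) := by
  induction k with
  | zero => simp [traj_zero', Nat.mod_eq_of_lt hi]
  | succ k ih =>
    have h1 : traj f (PX i) (fun j => PU ((i + j) % p)) (k+1)
        = f (traj f (PX i) (fun j => PU ((i + j) % p)) k, PU ((i + k) % p)) := rfl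
    rw [h1, ih, ← horb.2.2 _ (Nat.mod_lt _ hp)]
    congr 1
    rw [show i + (k+1) = (i+k) + 1 by ring]
    simp [Nat.add_mod]

end AuxLemmas


theorem stmt3
    (dn dm : ℕ)
    (X : Set (EuclideanSpace ℝ (Fin dn))) (U : Set (EuclideanSpace ℝ (Fin dm)))
    (f : EuclideanSpace ℝ (Fin dn) × EuclideanSpace ℝ (Fin dm) → EuclideanSpace ℝ (Fin dn))
    (ℓ : EuclideanSpace ℝ (Fin dn) × EuclideanSpace ℝ (Fin dm) → ℝ)
    (p : ℕ) (hp : 0 < p)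
    (PX : ℕ → EuclideanSpace ℝ (Fin dn)) (PU : ℕ → EuclideanSpace ℝ (Fin dm))
    (hopt : IsOptimalOrbit f X U ℓ p PX PU)
    -- A1 (continuity and compactness)
    (hcomp : IsCompact (X ×ˢ U))
    (hfc : ContinuousOn f (X ×ˢ U)) (hlc : ContinuousOn ℓ (X ×ˢ U))
    -- A2 (strict dissipativity)
    (lam : EuclideanSpace ℝ (Fin dn) → ℝ) (hlamc : ContinuousOn lam X)
    (αl : ℝ → ℝ) (hαl : IsKInf αl)
    (hdiss : ∀ x ∈ X, ∀ u ∈ U, f (x, u) ∈ X →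
      αl (distOrbit p (fun i => (PX i, PU i)) (x, u)) ≤
        rotCost f ℓ lam (avgCost ℓ p PX PU) (x, u))
    -- A3 (terminal conditions)
    (Xf : Set (EuclideanSpace ℝ (Fin dn))) (hXfc : IsCompact Xf) (hXfX : Xf ⊆ X)
    (hPXf : ∀ i < p, PX i ∈ Xf)
    (Vf : EuclideanSpace ℝ (Fin dn) → ℝ) (hVfc : ContinuousOn Vf Xf)
    (uf : EuclideanSpace ℝ (Fin dn) → EuclideanSpace ℝ (Fin dm))
    (hufU : ∀ x ∈ Xf, uf x ∈ U) (hufX : ∀ x ∈ Xf, f (x, uf x) ∈ X)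
    (hufXf : ∀ x ∈ Xf, f (x, uf x) ∈ Xf)
    (hufD : ∀ x ∈ Xf, Vf (f (x, uf x)) + ℓ (x, uf x) - avgCost ℓ p PX PU ≤ Vf x)
    -- A4 (terminal cost on the optimal orbit)
    (hA4 : ∀ i < p, Vf (PX i) = ℓ (PX i, PU i) - avgCost ℓ p PX PU + Vf (f (PX i, PU i)))
    -- A5 (bound on V_N)
    (γV : ℝ → ℝ) (hγV : IsKInf γV)
    (hA5 : ∀ N : ℕ, 0 < N → ∀ x ∈ XN f X U Xf N, ∀ i < p,
      ‖x - PX i‖ = distOrbitX p PX x →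
      |VN f X U ℓ Vf Xf N x - VN f X U ℓ Vf Xf N (PX i)| ≤ γV (distOrbitX p PX x))
    -- EMPC horizon and feedback law μ_N (first element of a minimizer)
    (N : ℕ) (hN : 0 < N)
    (μ : EuclideanSpace ℝ (Fin dn) → EuclideanSpace ℝ (Fin dm))
    (hμ : ∀ x ∈ XN f X U Xf N, ∃ u : ℕ → EuclideanSpace ℝ (Fin dm),
      FeasN f X U x N u ∧ traj f x u N ∈ Xf ∧
        JN f ℓ Vf x u N = VN f X U ℓ Vf Xf N x ∧ μ x = u 0) :
    ∃ α1 α2 : ℝ → ℝ, IsKInf α1 ∧ IsKInf α2 ∧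
      ∀ x ∈ XN f X U Xf N,
        α1 (distOrbit p (fun i => (PX i, PU i)) (x, μ x)) ≤
            VN f X U (rotCost f ℓ lam (avgCost ℓ p PX PU)) (fun y => Vf y + lam y - avgOrbit Vf p PX - avgOrbit lam p PX) Xf N x ∧
          VN f X U (rotCost f ℓ lam (avgCost ℓ p PX PU)) (fun y => Vf y + lam y - avgOrbit Vf p PX - avgOrbit lam p PX) Xf N x ≤ α2 (distOrbitX p PX x) ∧
          VN f X U (rotCost f ℓ lam (avgCost ℓ p PX PU)) (fun y => Vf y + lam y - avgOrbit Vf p PX - avgOrbit lam p PX) Xf N (f (x, μ x)) -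
              VN f X U (rotCost f ℓ lam (avgCost ℓ p PX PU)) (fun y => Vf y + lam y - avgOrbit Vf p PX - avgOrbit lam p PX) Xf N x ≤
            -(rotCost f ℓ lam (avgCost ℓ p PX PU) (x, μ x)) := by
  classical
  obtain ⟨horb, -⟩ := hopt
  obtain ⟨hPX_X, hPU_U, hstep⟩ := horb
  haveI : Nonempty (Fin p) := ⟨⟨0, hp⟩⟩
  have hpne : (p:ℝ) ≠ 0 := Nat.cast_ne_zero.mpr hp.ne'
  set lp := avgCost ℓ p PX PU with hlp
  set A := avgOrbit Vf p PX with hA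
  set B := avgOrbit lam p PX with hB
  set lr := rotCost f ℓ lam lp with hlr
  set Vft : EuclideanSpace ℝ (Fin dn) → ℝ := fun y => Vf y + lam y - A - B with hVft
  -- basic K-infinity facts
  have hαl0 : αl 0 = 0 := hαl.2.2.1
  have hαl_nonneg : ∀ t, 0 ≤ t → 0 ≤ αl t := by
    intro t ht
    rcases ht.eq_or_lt with h | h
    · rw [← h, hαl0]
    · rw [← hαl0]; exact (hαl.2.1 Set.self_mem_Ici (Set.mem_Ici.mpr ht) h).le
  have hαl_mono : ∀ s t : ℝ, 0 ≤ s → s ≤ t → αl s ≤ αl t := by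
    intro s t hs hst
    rcases hst.eq_or_lt with h | h
    · rw [h]
    · exact (hαl.2.1 (Set.mem_Ici.mpr hs) (Set.mem_Ici.mpr (hs.trans hst)) h).le
  have hdistO_nonneg : ∀ z, 0 ≤ distOrbit p (fun i => (PX i, PU i)) z := fun z =>
    le_ciInf (fun i => norm_nonneg _)
  have hdistX_nonneg : ∀ z, 0 ≤ distOrbitX p PX z := fun z =>
    le_ciInf (fun i => norm_nonneg _)
  have hlr_nonneg : ∀ a ∈ X, ∀ b ∈ U, f (a, b) ∈ X → 0 ≤ lr (a, b) := by
    intro a ha b hb hfab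
    exact le_trans (hαl_nonneg _ (hdistO_nonneg _)) (hdiss a ha b hb hfab)
  have hstep' : ∀ i, i < p → f (PX i, PU i) = PX ((i+1) % p) := fun i hi => (hstep i hi).symm
  -- stage cost vanishes on the orbit
  have hsum_lr : ∑ i ∈ Finset.range p, lr (PX i, PU i) = 0 := by
    have h1 : ∀ i ∈ Finset.range p, lr (PX i, PU i)
        = (ℓ (PX i, PU i) - lp) + (lam (PX (i % p)) - lam (PX ((i+1) % p))) := by
      intro i hi
      rw [Finset.mem_range] at hi
      simp only [hlr, rotCost]
      rw [hstep' i hi, Nat.mod_eq_of_lt hi]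
      ring
    rw [Finset.sum_congr rfl h1, Finset.sum_add_distrib]
    have h2 : ∑ i ∈ Finset.range p, (lam (PX (i % p)) - lam (PX ((i+1) % p))) = 0 := by
      have := Finset.sum_range_sub' (fun k => lam (PX (k % p))) p
      simpa [Nat.mod_self, Nat.zero_mod] using this
    have h3 : ∑ i ∈ Finset.range p, (ℓ (PX i, PU i) - lp) = 0 := by
      rw [Finset.sum_sub_distrib, Finset.sum_const, Finset.card_range, nsmul_eq_mul, hlp]
      simp only [avgCost]
      field_simp
      ring
    rw [h2, h3]
    ring
  have hlr_orbit : ∀ i, i < p → lr (PX i, PU i) = 0 := by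
    have hnn : ∀ i ∈ Finset.range p, 0 ≤ lr (PX i, PU i) := by
      intro i hi; rw [Finset.mem_range] at hi
      refine hlr_nonneg _ (hPX_X i hi) _ (hPU_U i hi) ?_
      rw [hstep' i hi]; exact hPX_X _ (Nat.mod_lt _ hp)
    intro i hi
    exact (Finset.sum_eq_zero_iff_of_nonneg hnn).mp hsum_lr i (Finset.mem_range.mpr hi)
  -- rotated terminal cost vanishes on the orbit
  have hVft_rel : ∀ i, i < p → Vft (PX i) = Vft (PX ((i+1) % p)) := by
    intro i hi
    have h4 := hA4 i hi
    rw [hstep' i hi] at h4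
    have h5 := hlr_orbit i hi
    simp only [hlr, rotCost] at h5
    rw [hstep' i hi] at h5
    simp only [hVft]
    linarith
  have hVft_const : ∀ k : ℕ, Vft (PX (k % p)) = Vft (PX 0) := by
    intro k
    induction k with
    | zero => rw [Nat.zero_mod]
    | succ k ih =>
      have h := hVft_rel (k % p) (Nat.mod_lt _ hp)
      have hidx : (k % p + 1) % p = (k+1) % p := by simp [Nat.add_mod]
      rw [hidx] at h
      rw [← h]; exact ih
  have hsum_Vft : ∑ i ∈ Finset.range p, Vft (PX i) = 0 := by
    have e : ∀ i ∈ Finset.range p, Vft (PX i) = Vf (PX i) + lam (PX i) - A - B :=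
      fun i _ => rfl
    rw [Finset.sum_congr rfl e]
    rw [Finset.sum_sub_distrib, Finset.sum_sub_distrib, Finset.sum_add_distrib,
      Finset.sum_const, Finset.sum_const, Finset.card_range,
      nsmul_eq_mul, nsmul_eq_mul, hA, hB]
    simp only [avgOrbit]
    field_simp
    ring
  have hVft_orbit : ∀ i, i < p → Vft (PX i) = 0 := by
    have hc : ∀ i, i < p → Vft (PX i) = Vft (PX 0) := by
      intro i hi; have := hVft_const i; rwa [Nat.mod_eq_of_lt hi] at this
    have hsum : ∑ i ∈ Finset.range p, Vft (PX i) = p * Vft (PX 0) := by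
      rw [Finset.sum_congr rfl (fun i hi => hc i (Finset.mem_range.mp hi)),
        Finset.sum_const, Finset.card_range, nsmul_eq_mul]
    intro i hi
    have h0 : Vft (PX 0) = 0 := by
      have h := hsum_Vft; rw [hsum] at h
      exact (mul_eq_zero.mp h).resolve_left hpne
    rw [hc i hi, h0]
  -- rotated A3
  have hA3rot : ∀ z ∈ Xf, lr (z, uf z) + Vft (f (z, uf z)) ≤ Vft z := by
    intro z hz
    have h := hufD z hz
    simp only [hlr, rotCost, hVft]
    linarith
  -- Vft is nonnegative on Xf
  have hVftc : ContinuousOn Vft Xf := by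
    simp only [hVft]
    exact ((hVfc.add (hlamc.mono hXfX)).sub continuousOn_const).sub continuousOn_const
  have hXfne : Xf.Nonempty := ⟨PX 0, hPXf 0 hp⟩
  obtain ⟨zm, hzm, hzmin⟩ := hXfc.exists_isMinOn hXfne hVftc
  have hmlow : ∀ y ∈ Xf, Vft zm ≤ Vft y := fun y hy => isMinOn_iff.mp hzmin y hy
  have hVft_nonneg : ∀ z ∈ Xf, 0 ≤ Vft z := by
    intro x hx
    by_contra hneg
    push_neg at hneg
    set y : ℕ → EuclideanSpace ℝ (Fin dn) :=
      fun k => Nat.rec x (fun _ s => f (s, uf s)) k with hy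
    have hy0 : y 0 = x := rfl
    have hysucc : ∀ k, y (k+1) = f (y k, uf (y k)) := fun k => rfl
    have hyXf : ∀ k, y k ∈ Xf := by
      intro k; induction k with
      | zero => exact hx
      | succ k ih => rw [hysucc]; exact hufXf _ ih
    set dseq : ℕ → ℝ :=
      fun k => distOrbit p (fun i => (PX i, PU i)) (y k, uf (y k)) with hdseq
    have hddpos : ∀ k, αl (dseq k) ≤ lr (y k, uf (y k)) := by
      intro k
      refine hdiss _ (hXfX (hyXf k)) _ (hufU _ (hyXf k)) ?_
      rw [← hysucc]; exact hXfX (hyXf (k+1))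
    have hpart : ∀ K, ∑ k ∈ Finset.range K, αl (dseq k) ≤ Vft x - Vft (y K) := by
      intro K; induction K with
      | zero => simp [hy0]
      | succ K ih =>
        rw [Finset.sum_range_succ]
        have h1 := hA3rot (y K) (hyXf K)
        rw [← hysucc K] at h1
        have h2 := hddpos K
        linarith
    have hsmalld : ∀ δ : ℝ, 0 < δ → ∃ k, dseq k < δ := by
      intro δ hδ
      by_contra hcon
      push_neg at hcon
      have hαδ : 0 < αl δ := by
        rw [← hαl0]
        exact hαl.2.1 Set.self_mem_Ici (Set.mem_Ici.mpr hδ.le) hδ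
      have hbd : ∀ K : ℕ, (K : ℝ) * αl δ ≤ Vft x - Vft zm := by
        intro K
        have h1 : (K:ℝ) * αl δ ≤ ∑ k ∈ Finset.range K, αl (dseq k) := by
          calc (K:ℝ) * αl δ = ∑ _k ∈ Finset.range K, αl δ := by
                rw [Finset.sum_const, Finset.card_range, nsmul_eq_mul]
            _ ≤ _ := Finset.sum_le_sum (fun k _ => hαl_mono δ (dseq k) hδ.le (hcon k))
        have h2 := hpart K
        have h3 := hmlow (y K) (hyXf K)
        linarith
      obtain ⟨K, hK⟩ := exists_nat_gt ((Vft x - Vft zm) / αl δ)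
      have := hbd K
      rw [div_lt_iff₀ hαδ] at hK
      linarith
    obtain ⟨δ, hδpos, hδ⟩ := Metric.uniformContinuousOn_iff.mp
      (hXfc.uniformContinuousOn_of_continuous hVftc) (-Vft x) (by linarith)
    obtain ⟨k, hk⟩ := hsmalld δ hδpos
    obtain ⟨iF, hiF⟩ := exists_lt_of_ciInf_lt hk
    have hxlt : ‖y k - PX iF‖ < δ := by
      have h1 := norm_fst_le (((y k, uf (y k)) : _ × _) - (PX (iF : ℕ), PU (iF : ℕ)))
      rw [Prod.fst_sub] at h1
      exact lt_of_le_of_lt h1 hiF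
    have hcl := hδ (y k) (hyXf k) (PX (iF : ℕ)) (hPXf _ iF.isLt)
      (by rw [dist_eq_norm]; exact hxlt)
    rw [Real.dist_eq] at hcl
    have h0 := hVft_orbit (iF : ℕ) iF.isLt
    have hyk_le : Vft (y k) ≤ Vft x := by
      have h := hpart k
      have hnn : 0 ≤ ∑ j ∈ Finset.range k, αl (dseq j) :=
        Finset.sum_nonneg fun j _ => hαl_nonneg _ (hdistO_nonneg _)
      linarith
    rw [abs_lt] at hcl
    have := hcl.1
    linarith
  -- nonnegativity of rotated costs along feasible trajectories
  have hfeas_stage : ∀ (z : EuclideanSpace ℝ (Fin dn)) (u : ℕ → EuclideanSpace ℝ (Fin dm)),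
      FeasN f X U z N u → ∀ k, k < N → 0 ≤ lr (traj f z u k, u k) := by
    intro z u hu k hk
    refine hlr_nonneg _ (hu.2 k hk.le) _ (hu.1 k hk) ?_
    have := hu.2 (k+1) hk
    rwa [traj_succ'] at this
  have hJrot_nonneg : ∀ (z : EuclideanSpace ℝ (Fin dn)) (u : ℕ → EuclideanSpace ℝ (Fin dm)),
      FeasN f X U z N u → traj f z u N ∈ Xf → 0 ≤ JN f lr Vft z u N := by
    intro z u hu hT
    have h1 : 0 ≤ J1 f lr z u N := by
      unfold J1
      exact Finset.sum_nonneg fun k hk => hfeas_stage z u hu k (Finset.mem_range.mp hk)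
    have h2 := hVft_nonneg _ hT
    simp only [JN]; linarith
  have hbddrot : ∀ z : EuclideanSpace ℝ (Fin dn), BddBelow ((fun u => JN f lr Vft z u N) ''
      {u | FeasN f X U z N u ∧ traj f z u N ∈ Xf}) := by
    intro z
    refine ⟨0, ?_⟩
    rintro r ⟨u, ⟨hu, hT⟩, rfl⟩
    exact hJrot_nonneg z u hu hT
  have hJrel : ∀ (z : EuclideanSpace ℝ (Fin dn)) (u : ℕ → EuclideanSpace ℝ (Fin dm)),
      JN f lr Vft z u N = JN f ℓ Vf z u N + (lam z - A - B - N * lp) :=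
    fun z u => JN_rot f ℓ lam lp A B Vf z u N
  have hbddorig : ∀ z : EuclideanSpace ℝ (Fin dn), BddBelow ((fun u => JN f ℓ Vf z u N) ''
      {u | FeasN f X U z N u ∧ traj f z u N ∈ Xf}) := by
    intro z
    refine ⟨-(lam z - A - B - N * lp), ?_⟩
    rintro r ⟨u, ⟨hu, hT⟩, rfl⟩
    have h := hJrot_nonneg z u hu hT
    rw [hJrel z u] at h
    simp only at h ⊢
    linarith
  have hkey : ∀ (x : EuclideanSpace ℝ (Fin dn)) (u : ℕ → EuclideanSpace ℝ (Fin dm)),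
      FeasN f X U x N u → traj f x u N ∈ Xf → JN f ℓ Vf x u N = VN f X U ℓ Vf Xf N x →
      VN f X U lr Vft Xf N x = JN f lr Vft x u N := by
    intro x u hu hT hoptu
    refine le_antisymm (csInf_le (hbddrot x) ⟨u, ⟨hu, hT⟩, rfl⟩) ?_
    refine le_csInf ⟨_, ⟨u, ⟨hu, hT⟩, rfl⟩⟩ ?_
    rintro b ⟨v, ⟨hv, hTv⟩, rfl⟩
    have h1 : VN f X U ℓ Vf Xf N x ≤ JN f ℓ Vf x v N :=
      csInf_le (hbddorig x) ⟨v, ⟨hv, hTv⟩, rfl⟩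
    simp only []
    rw [hJrel x u, hJrel x v, hoptu]
    linarith
  -- value on the orbit
  have horbfeas : ∀ i, i < p → FeasN f X U (PX i) N (fun j => PU ((i + j) % p))
      ∧ traj f (PX i) (fun j => PU ((i + j) % p)) N ∈ Xf := by
    intro i hi
    have ht := traj_orbit f X U p PX PU ⟨hPX_X, hPU_U, hstep⟩ hp i hi
    refine ⟨⟨fun k _ => hPU_U _ (Nat.mod_lt _ hp), fun k _ => ?_⟩, ?_⟩
    · rw [ht k]; exact hPX_X _ (Nat.mod_lt _ hp)
    · rw [ht N]; exact hPXf _ (Nat.mod_lt _ hp)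
  have hVorbit : ∀ i, i < p →
      VN f X U ℓ Vf Xf N (PX i) ≤ -(lam (PX i) - A - B - N * lp) := by
    intro i hi
    obtain ⟨hfe, hT⟩ := horbfeas i hi
    have h1 : VN f X U ℓ Vf Xf N (PX i) ≤ JN f ℓ Vf (PX i) (fun j => PU ((i+j)%p)) N :=
      csInf_le (hbddorig _) ⟨_, ⟨hfe, hT⟩, rfl⟩
    have ht := traj_orbit f X U p PX PU ⟨hPX_X, hPU_U, hstep⟩ hp i hi
    have h2 : JN f lr Vft (PX i) (fun j => PU ((i+j)%p)) N = 0 := by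
      have e1 : J1 f lr (PX i) (fun j => PU ((i+j)%p)) N = 0 := by
        unfold J1
        apply Finset.sum_eq_zero
        intro k _
        have hv := hlr_orbit ((i+k) % p) (Nat.mod_lt _ hp)
        simpa [ht k] using hv
      simp only [JN]
      rw [e1, ht N, hVft_orbit _ (Nat.mod_lt _ hp)]
      ring
    rw [hJrel] at h2
    linarith
  -- attainment of the state distance
  have hattain : ∀ z : EuclideanSpace ℝ (Fin dn),
      ∃ i, i < p ∧ ‖z - PX i‖ = distOrbitX p PX z := by
    intro z
    obtain ⟨i, -, hmin⟩ := Finset.exists_min_image (Finset.univ : Finset (Fin p))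
      (fun j : Fin p => ‖z - PX (j : ℕ)‖) ⟨⟨0, hp⟩, Finset.mem_univ _⟩
    refine ⟨(i : ℕ), i.isLt, le_antisymm ?_ ?_⟩
    · exact le_ciInf fun j => hmin j (Finset.mem_univ _)
    · exact ciInf_le ⟨0, by rintro r ⟨j, rfl⟩; exact norm_nonneg _⟩ i
  -- construction of the modulus majorant β
  have hUne : U.Nonempty := ⟨PU 0, hPU_U 0 hp⟩
  have hXne : X.Nonempty := ⟨PX 0, hPX_X 0 hp⟩
  have hXcomp : IsCompact X := by
    have hXe : X = Prod.fst '' (X ×ˢ U) := (Set.fst_image_prod X hUne).symm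
    rw [hXe]; exact hcomp.image continuous_fst
  obtain ⟨zmin, hzminX, hzminm⟩ := hXcomp.exists_isMinOn hXne hlamc
  obtain ⟨zmax, hzmaxX, hzmaxm⟩ := hXcomp.exists_isMaxOn hXne hlamc
  set M := lam zmax - lam zmin with hM
  have hMnn : 0 ≤ M := by
    have h1 := isMinOn_iff.mp hzminm zmax hzmaxX
    simp only [hM]; linarith
  have hdiffM : ∀ a ∈ X, ∀ b ∈ X, lam a - lam b ≤ M := by
    intro a ha b hb
    have h1 := isMaxOn_iff.mp hzmaxm a ha
    have h2 := isMinOn_iff.mp hzminm b hb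
    simp only [hM]; linarith
  set g : ℝ → ℝ := fun t => sSup (insert 0 {r | ∃ a ∈ X, ∃ i, i < p ∧
      r = lam a - lam (PX i) ∧ ‖a - PX i‖ ≤ t}) with hg
  have hgM : ∀ t, 0 ≤ t → g t ≤ M := by
    intro t _
    refine Real.sSup_le ?_ hMnn
    rintro r hr
    rcases Set.mem_insert_iff.mp hr with h | h
    · rw [h]; exact hMnn
    · obtain ⟨a, ha, i, hi, rfl, -⟩ := h
      exact hdiffM a ha _ (hXfX (hPXf i hi))
  have hgsmall : ∀ ε : ℝ, 0 < ε → ∃ δ > 0, ∀ t, 0 ≤ t → t ≤ δ → g t ≤ ε := by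
    intro ε hε
    obtain ⟨δ, hδpos, hδ⟩ := Metric.uniformContinuousOn_iff.mp
      (hXcomp.uniformContinuousOn_of_continuous hlamc) ε hε
    refine ⟨δ/2, by linarith, ?_⟩
    intro t ht htδ
    refine Real.sSup_le ?_ hε.le
    rintro r hr
    rcases Set.mem_insert_iff.mp hr with h | h
    · rw [h]; exact hε.le
    · obtain ⟨a, ha, i, hi, rfl, hnn⟩ := h
      have hc := hδ a ha (PX i) (hXfX (hPXf i hi)) (by rw [dist_eq_norm]; linarith)
      rw [Real.dist_eq] at hc
      have habs := abs_lt.mp hc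
      linarith [habs.1, habs.2]
  have hgval : ∀ a ∈ X, ∀ i, i < p → lam a - lam (PX i) ≤ g (‖a - PX i‖) := by
    intro a ha i hi
    refine le_csSup ?_ ?_
    · refine ⟨max M 0, ?_⟩
      rintro r hr
      rcases Set.mem_insert_iff.mp hr with h | h
      · rw [h]; exact le_max_right _ _
      · obtain ⟨a', ha', i', hi', rfl, -⟩ := h
        exact le_trans (hdiffM a' ha' _ (hXfX (hPXf i' hi'))) (le_max_left _ _)
    · exact Set.mem_insert_iff.mpr (Or.inr ⟨a, ha, i, hi, rfl, le_refl _⟩)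
  obtain ⟨β, hβK, hβmaj⟩ := kinf_majorant g M hMnn hgM hgsmall
  -- assemble
  refine ⟨αl, fun t => γV t + β t, hαl, ⟨?_, ?_, ?_, ?_⟩, ?_⟩
  · exact hγV.1.add hβK.1
  · exact hγV.2.1.add hβK.2.1
  · show γV 0 + β 0 = 0
    rw [hγV.2.2.1, hβK.2.2.1]; ring
  · refine tendsto_atTop_mono' atTop ?_ hβK.2.2.2
    filter_upwards [eventually_ge_atTop (0:ℝ)] with t ht
    have h1 : 0 ≤ γV t := by
      rcases ht.eq_or_lt with h | h
      · rw [← h, hγV.2.2.1]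
      · rw [← hγV.2.2.1]
        exact (hγV.2.1 Set.self_mem_Ici (Set.mem_Ici.mpr ht) h).le
    linarith
  -- the three inequalities
  intro x hx
  obtain ⟨us, hus, husT, husV, husμ⟩ := hμ x hx
  have hWx : VN f X U lr Vft Xf N x = JN f lr Vft x us N := hkey x us hus husT husV
  have hxX : x ∈ X := hus.2 0 (Nat.zero_le _)
  obtain ⟨N', rfl⟩ : ∃ N', N = N' + 1 := ⟨N - 1, by omega⟩
  have hsplit : J1 f lr x us (N'+1)
      = lr (x, us 0) + ∑ k ∈ Finset.range N', lr (traj f x us (k+1), us (k+1)) := by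
    unfold J1
    rw [Finset.sum_range_succ']
    rw [traj_zero']
    ring
  -- lower bound
  have hlow : αl (distOrbit p (fun i => (PX i, PU i)) (x, μ x))
      ≤ VN f X U lr Vft Xf (N'+1) x := by
    have h1 : αl (distOrbit p (fun i => (PX i, PU i)) (x, μ x)) ≤ lr (x, us 0) := by
      rw [husμ]
      refine hdiss x hxX (us 0) (hus.1 0 (Nat.succ_pos _)) ?_
      have := hus.2 1 (by omega)
      rwa [traj_succ', traj_zero'] at this
    have h2 : 0 ≤ ∑ k ∈ Finset.range N', lr (traj f x us (k+1), us (k+1)) := by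
      refine Finset.sum_nonneg fun k hk => ?_
      have hk' := Finset.mem_range.mp hk
      exact hfeas_stage x us hus (k+1) (by omega)
    have h3 := hVft_nonneg _ husT
    rw [hWx]; simp only [JN]; rw [hsplit]
    linarith
  -- upper bound
  obtain ⟨i, hi, hieq⟩ := hattain x
  have hA5x := hA5 (N'+1) (Nat.succ_pos _) x hx i hi hieq
  have h5 := (abs_le.mp hA5x).2
  have h6 := hVorbit i hi
  have h7 := hgval x hxX i hi
  rw [hieq] at h7
  have h8 := hβmaj _ (hdistX_nonneg x)
  have hup : VN f X U lr Vft Xf (N'+1) x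
      ≤ γV (distOrbitX p PX x) + β (distOrbitX p PX x) := by
    rw [hWx, hJrel x us, husV]
    linarith
  -- decrease condition
  set xN := traj f x us (N'+1) with hxN
  set u' : ℕ → EuclideanSpace ℝ (Fin dm) :=
    fun k => if k + 1 < N' + 1 then us (k+1) else uf xN with hu'
  have htr' : ∀ k, k ≤ N' → traj f (f (x, μ x)) u' k = traj f x us (k+1) := by
    intro k hk
    induction k with
    | zero => rw [traj_zero', husμ]; rfl
    | succ k ih =>
      have hu'k : u' k = us (k+1) := by
        simp only [hu']; rw [if_pos (by omega : k + 1 < N' + 1)]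
      rw [traj_succ', ih (by omega), hu'k]
      rfl
  have hu'N : u' N' = uf xN := by
    simp only [hu']; rw [if_neg (by omega)]
  have htrN : traj f (f (x, μ x)) u' (N'+1) = f (xN, uf xN) := by
    rw [traj_succ', htr' N' le_rfl, hu'N, ← hxN]
  have hu'feas : FeasN f X U (f (x, μ x)) (N'+1) u' := by
    constructor
    · intro k hk
      by_cases h : k + 1 < N' + 1
      · simp only [hu']; rw [if_pos h]; exact hus.1 (k+1) (by omega)
      · simp only [hu']; rw [if_neg h]; exact hufU _ husT
    · intro k hk
      rcases Nat.lt_or_ge k (N'+1) with h | h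
      · rw [htr' k (by omega)]
        exact hus.2 (k+1) (by omega)
      · have hkN : k = N'+1 := by omega
        subst hkN
        rw [htrN]
        exact hXfX (hufXf _ husT)
  have hu'T : traj f (f (x, μ x)) u' (N'+1) ∈ Xf := by
    rw [htrN]; exact hufXf _ husT
  have hcost : JN f lr Vft (f (x, μ x)) u' (N'+1)
      ≤ JN f lr Vft x us (N'+1) - lr (x, μ x) := by
    have e1 : J1 f lr (f (x, μ x)) u' (N'+1)
        = (∑ k ∈ Finset.range N', lr (traj f x us (k+1), us (k+1))) + lr (xN, uf xN) := by
      unfold J1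
      rw [Finset.sum_range_succ]
      congr 1
      · refine Finset.sum_congr rfl fun k hk => ?_
        have hk' := Finset.mem_range.mp hk
        have hu'k : u' k = us (k+1) := by
          simp only [hu']; rw [if_pos (by omega : k + 1 < N' + 1)]
        rw [htr' k (by omega), hu'k]
      · rw [htr' N' le_rfl, hu'N, ← hxN]
    have e3 : lr (xN, uf xN) + Vft (f (xN, uf xN)) ≤ Vft xN := hA3rot xN husT
    simp only [JN]
    rw [e1, hsplit, htrN, husμ, ← hxN]
    linarith
  have hWplus : VN f X U lr Vft Xf (N'+1) (f (x, μ x))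
      ≤ JN f lr Vft (f (x, μ x)) u' (N'+1) :=
    csInf_le (hbddrot _) ⟨u', ⟨hu'feas, hu'T⟩, rfl⟩
  refine ⟨hlow, hup, ?_⟩
  rw [hWx]
  linarith
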